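/- (Smoothness of the value function under the direct parameterization) For every finite discounted MDP and every starting state s₀, the gradient map π ↦ ∇_π V^π(s₀), with entries [∇_π V^π(s₀)]_{s,a} = (1/(1−γ)) d^π_{s₀}(s) Q^π(s,a), is Lipschitz on Δ(A)^S with constant 2γ|A|/(1−γ)³: for all π, π′ ∈ Δ(A)^S, ‖∇_π V^π(s₀) − ∇_π V^{π′}(s₀)‖₂ ≤ (2γ|A|/(1−γ)³) ‖π − π′‖₂. -/

import Mathlib

open scoped BigOperators InnerProductSpace

/-- A finite Markov decision process (the data only: transition probabilities `P`,
rewards `r`, and discount factor `γ`). -/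
structure FinMDP where
  S : Type
  A : Type
  [fS : Fintype S]
  [dS : DecidableEq S]
  [fA : Fintype A]
  [dA : DecidableEq A]
  P : S → A → S → ℝ
  r : S → A → ℝ
  γ : ℝ

attribute [instance] FinMDP.fS FinMDP.dS FinMDP.fA FinMDP.dA

/-- `μ` is a probability distribution on the finite type `X`. -/
def IsDist {X : Type*} [Fintype X] (μ : X → ℝ) : Prop :=
  (∀ x, 0 ≤ μ x) ∧ ∑ x, μ x = 1

namespace FinMDP

variable (M : FinMDP)

/-- The MDP data is well formed: `P` is a transition kernel, rewards lie in `[0,1]`,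
and `γ ∈ [0,1)`. -/
def Valid : Prop :=
  (∀ s a s', 0 ≤ M.P s a s') ∧ (∀ s a, ∑ s', M.P s a s' = 1) ∧
    (∀ s a, 0 ≤ M.r s a ∧ M.r s a ≤ 1) ∧ 0 ≤ M.γ ∧ M.γ < 1

/-- `π` is a stochastic policy: `π s a` is the probability `π(a|s)`. -/
def IsPolicy (π : M.S → M.A → ℝ) : Prop :=
  (∀ s a, 0 ≤ π s a) ∧ ∀ s, ∑ a, π s a = 1

/-- State-to-state transition matrix induced by a policy. -/
noncomputable def Pmat (π : M.S → M.A → ℝ) : Matrix M.S M.S ℝ :=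
  Matrix.of fun s s' => ∑ a, π s a * M.P s a s'

/-- Expected one-step reward under a policy. -/
noncomputable def rPol (π : M.S → M.A → ℝ) (s : M.S) : ℝ :=
  ∑ a, π s a * M.r s a

/-- The value function `V^π(s₀) = E[∑ₜ γ^t r(s_t, a_t)]`. -/
noncomputable def V (π : M.S → M.A → ℝ) (s₀ : M.S) : ℝ :=
  ∑' t : ℕ, M.γ ^ t * ((M.Pmat π ^ t).mulVec (M.rPol π)) s₀

/-- `V^π(ρ)` for a starting state distribution `ρ`. -/
noncomputable def Vd (π : M.S → M.A → ℝ) (ρ : M.S → ℝ) : ℝ :=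
  ∑ s, ρ s * M.V π s

/-- The action-value function `Q^π(s,a)`. -/
noncomputable def Qf (π : M.S → M.A → ℝ) (s : M.S) (a : M.A) : ℝ :=
  M.r s a + M.γ * ∑ s', M.P s a s' * M.V π s'

/-- The advantage function `A^π(s,a) = Q^π(s,a) - V^π(s)`. -/
noncomputable def Adv (π : M.S → M.A → ℝ) (s : M.S) (a : M.A) : ℝ :=
  M.Qf π s a - M.V π s

/-- Discounted state visitation distribution `d^π_{s₀}(s)`. -/
noncomputable def dvisit (π : M.S → M.A → ℝ) (s₀ s : M.S) : ℝ :=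
  (1 - M.γ) * ∑' t : ℕ, M.γ ^ t * (M.Pmat π ^ t) s₀ s

/-- Discounted state visitation distribution `d^π_μ(s)` for a starting distribution `μ`. -/
noncomputable def dvisitD (π : M.S → M.A → ℝ) (μ : M.S → ℝ) (s : M.S) : ℝ :=
  ∑ s₀, μ s₀ * M.dvisit π s₀ s

/-- State-action transition matrix induced by a policy. -/
noncomputable def PmatSA (π : M.S → M.A → ℝ) :
    Matrix (M.S × M.A) (M.S × M.A) ℝ :=
  Matrix.of fun p q => M.P p.1 p.2 q.1 * π q.1 q.2

/-- Discounted state-action visitation measure `d^π_ν(s,a)` started from `(s₀,a₀) ∼ ν`,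
executing `a₀` first and following `π` thereafter. -/
noncomputable def dvisitSA (π : M.S → M.A → ℝ) (ν : M.S × M.A → ℝ)
    (p : M.S × M.A) : ℝ :=
  (1 - M.γ) * ∑' t : ℕ, M.γ ^ t * ∑ p₀, ν p₀ * (M.PmatSA π ^ t) p₀ p

/-- The softmax policy `π_θ(a|s) = exp(θ_{s,a}) / ∑_{a'} exp(θ_{s,a'})`. -/
noncomputable def softmaxPolicy (θ : EuclideanSpace ℝ (M.S × M.A)) :
    M.S → M.A → ℝ :=
  fun s a => Real.exp (θ (s, a)) / ∑ a', Real.exp (θ (s, a'))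

end FinMDP


/-! ### Auxiliary lemmas for the smoothness proof -/

namespace FinMDPAux

open FinMDP

variable {S : Type} [Fintype S] [DecidableEq S]

def Stoch (P : Matrix S S ℝ) : Prop := (∀ i j, 0 ≤ P i j) ∧ ∀ i, ∑ j, P i j = 1

theorem abs_tsum_le {f : ℕ → ℝ} (h : Summable fun n => |f n|) :
    |∑' n, f n| ≤ ∑' n, |f n| := by
  simpa [Real.norm_eq_abs] using
    norm_tsum_le_tsum_norm (f := f) (by simpa [Real.norm_eq_abs] using h)

omit [DecidableEq S] in
theorem Stoch.mul {P Q : Matrix S S ℝ} (hP : Stoch P) (hQ : Stoch Q) : Stoch (P * Q) := by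
  constructor
  · intro i j
    rw [Matrix.mul_apply]
    exact Finset.sum_nonneg fun k _ => mul_nonneg (hP.1 i k) (hQ.1 k j)
  · intro i
    simp only [Matrix.mul_apply]
    rw [Finset.sum_comm]
    calc ∑ k, ∑ j, P i k * Q k j = ∑ k, P i k * ∑ j, Q k j := by
          simp [Finset.mul_sum]
      _ = 1 := by simp [hQ.2, hP.2 i]

theorem Stoch.pow {P : Matrix S S ℝ} (hP : Stoch P) (t : ℕ) : Stoch (P ^ t) := by
  induction t with
  | zero =>
    refine ⟨fun i j => ?_, fun i => ?_⟩ <;> simp [Matrix.one_apply]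
    positivity
  | succ n ih => rw [pow_succ]; exact ih.mul hP

omit [DecidableEq S] in
theorem Stoch.mulVec_le {P : Matrix S S ℝ} (hP : Stoch P) {x : S → ℝ} {c : ℝ}
    (hx : ∀ s, |x s| ≤ c) (s : S) : |P.mulVec x s| ≤ c := by
  have h : P.mulVec x s = ∑ j, P s j * x j := rfl
  rw [h]
  calc |∑ j, P s j * x j| ≤ ∑ j, |P s j * x j| := Finset.abs_sum_le_sum_abs _ _
    _ ≤ ∑ j, P s j * c := by
        refine Finset.sum_le_sum fun j _ => ?_
        rw [abs_mul, abs_of_nonneg (hP.1 s j)]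
        exact mul_le_mul_of_nonneg_left (hx j) (hP.1 s j)
    _ = c := by rw [← Finset.sum_mul, hP.2 s, one_mul]

omit [DecidableEq S] in
theorem Stoch.mulVec_nonneg {P : Matrix S S ℝ} (hP : Stoch P) {x : S → ℝ}
    (hx : ∀ s, 0 ≤ x s) (s : S) : 0 ≤ P.mulVec x s :=
  Finset.sum_nonneg fun j _ => mul_nonneg (hP.1 s j) (hx j)

variable {M : FinMDP}

theorem pmat_stoch (hM : M.Valid) {π : M.S → M.A → ℝ} (hπ : M.IsPolicy π) :
    Stoch (M.Pmat π) := by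
  constructor
  · intro i j
    exact Finset.sum_nonneg fun a _ => mul_nonneg (hπ.1 i a) (hM.1 i a j)
  · intro i
    unfold FinMDP.Pmat
    simp only [Matrix.of_apply]
    rw [Finset.sum_comm]
    calc ∑ a, ∑ j, π i a * M.P i a j = ∑ a, π i a * ∑ j, M.P i a j := by
          simp [Finset.mul_sum]
      _ = 1 := by simp [hM.2.1, hπ.2 i]

theorem rPol_abs_le (hM : M.Valid) {π : M.S → M.A → ℝ} (hπ : M.IsPolicy π) (s : M.S) :
    |M.rPol π s| ≤ 1 := by
  unfold FinMDP.rPol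
  rw [abs_of_nonneg (Finset.sum_nonneg fun a _ =>
    mul_nonneg (hπ.1 s a) ((hM.2.2.1 s a).1))]
  calc ∑ a, π s a * M.r s a ≤ ∑ a, π s a * 1 :=
        Finset.sum_le_sum fun a _ => mul_le_mul_of_nonneg_left ((hM.2.2.1 s a).2) (hπ.1 s a)
    _ = 1 := by simp [hπ.2 s]

theorem summable_V (hM : M.Valid) {π : M.S → M.A → ℝ} (hπ : M.IsPolicy π) (s : M.S) :
    Summable (fun t : ℕ => M.γ ^ t * ((M.Pmat π ^ t).mulVec (M.rPol π)) s) := by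
  refine Summable.of_abs (Summable.of_nonneg_of_le (fun t => abs_nonneg _) (fun t => ?_)
    (summable_geometric_of_lt_one hM.2.2.2.1 hM.2.2.2.2))
  rw [abs_mul, abs_pow, abs_of_nonneg hM.2.2.2.1]
  have := ((pmat_stoch hM hπ).pow t).mulVec_le (rPol_abs_le hM hπ) s
  calc M.γ ^ t * |((M.Pmat π ^ t).mulVec (M.rPol π)) s| ≤ M.γ ^ t * 1 :=
        mul_le_mul_of_nonneg_left this (pow_nonneg hM.2.2.2.1 t)
    _ = M.γ ^ t := mul_one _

theorem V_abs_le (hM : M.Valid) {π : M.S → M.A → ℝ} (hπ : M.IsPolicy π) (s : M.S) :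
    |M.V π s| ≤ (1 - M.γ)⁻¹ := by
  unfold FinMDP.V
  calc |∑' t : ℕ, M.γ ^ t * ((M.Pmat π ^ t).mulVec (M.rPol π)) s|
      ≤ ∑' t : ℕ, |M.γ ^ t * ((M.Pmat π ^ t).mulVec (M.rPol π)) s| :=
        abs_tsum_le (summable_V hM hπ s).abs
    _ ≤ ∑' t : ℕ, M.γ ^ t := by
        refine Summable.tsum_le_tsum (fun t => ?_) (summable_V hM hπ s).abs
          (summable_geometric_of_lt_one hM.2.2.2.1 hM.2.2.2.2)
        rw [abs_mul, abs_pow, abs_of_nonneg hM.2.2.2.1]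
        have := ((pmat_stoch hM hπ).pow t).mulVec_le (rPol_abs_le hM hπ) s
        calc M.γ ^ t * |((M.Pmat π ^ t).mulVec (M.rPol π)) s| ≤ M.γ ^ t * 1 :=
              mul_le_mul_of_nonneg_left this (pow_nonneg hM.2.2.2.1 t)
          _ = M.γ ^ t := mul_one _
    _ = (1 - M.γ)⁻¹ := tsum_geometric_of_lt_one hM.2.2.2.1 hM.2.2.2.2

theorem V_nonneg (hM : M.Valid) {π : M.S → M.A → ℝ} (hπ : M.IsPolicy π) (s : M.S) :
    0 ≤ M.V π s := by
  refine tsum_nonneg fun t => mul_nonneg (pow_nonneg hM.2.2.2.1 t) ?_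
  refine ((pmat_stoch hM hπ).pow t).mulVec_nonneg (fun s' => ?_) s
  exact Finset.sum_nonneg fun a _ => mul_nonneg (hπ.1 s' a) ((hM.2.2.1 s' a).1)

theorem bellman_V (hM : M.Valid) {π : M.S → M.A → ℝ} (hπ : M.IsPolicy π) (s : M.S) :
    M.V π s = M.rPol π s + M.γ * ∑ s', M.Pmat π s s' * M.V π s' := by
  have hsum := summable_V hM hπ
  have h0 : M.V π s = M.γ ^ 0 * ((M.Pmat π ^ 0).mulVec (M.rPol π)) s +
      ∑' t : ℕ, M.γ ^ (t+1) * ((M.Pmat π ^ (t+1)).mulVec (M.rPol π)) s := by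
    unfold FinMDP.V
    exact Summable.tsum_eq_zero_add (hsum s)
  have hterm : ∀ t : ℕ, M.γ ^ (t+1) * ((M.Pmat π ^ (t+1)).mulVec (M.rPol π)) s =
      ∑ s', M.Pmat π s s' * (M.γ * (M.γ ^ t * ((M.Pmat π ^ t).mulVec (M.rPol π)) s')) := by
    intro t
    rw [pow_succ' (M.Pmat π) t, ← Matrix.mulVec_mulVec]
    have : (M.Pmat π).mulVec ((M.Pmat π ^ t).mulVec (M.rPol π)) s =
        ∑ s', M.Pmat π s s' * ((M.Pmat π ^ t).mulVec (M.rPol π)) s' := rfl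
    rw [this, Finset.mul_sum]
    exact Finset.sum_congr rfl fun s' _ => by ring
  have hswap : ∑' t : ℕ, M.γ ^ (t+1) * ((M.Pmat π ^ (t+1)).mulVec (M.rPol π)) s =
      ∑ s', M.Pmat π s s' * (M.γ * M.V π s') := by
    calc ∑' t : ℕ, M.γ ^ (t+1) * ((M.Pmat π ^ (t+1)).mulVec (M.rPol π)) s
        = ∑' t : ℕ, ∑ s', M.Pmat π s s' *
            (M.γ * (M.γ ^ t * ((M.Pmat π ^ t).mulVec (M.rPol π)) s')) := by
          exact tsum_congr hterm
      _ = ∑ s', ∑' t : ℕ, M.Pmat π s s' *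
            (M.γ * (M.γ ^ t * ((M.Pmat π ^ t).mulVec (M.rPol π)) s')) := by
          exact Summable.tsum_finsetSum fun s' _ => ((hsum s').mul_left _).mul_left _
      _ = ∑ s', M.Pmat π s s' * (M.γ * M.V π s') := by
          refine Finset.sum_congr rfl fun s' _ => ?_
          rw [tsum_mul_left, tsum_mul_left]
          rfl
  rw [h0, hswap]
  simp only [pow_zero, pow_zero, one_mul, Matrix.one_mulVec]
  rw [Finset.mul_sum]
  congr 1
  exact Finset.sum_congr rfl fun s' _ => by ring

theorem pmat_pow_entry_le_one (hM : M.Valid) {π : M.S → M.A → ℝ} (hπ : M.IsPolicy π)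
    (t : ℕ) (s₀ s : M.S) : (M.Pmat π ^ t) s₀ s ≤ 1 := by
  have h := (pmat_stoch hM hπ).pow t
  calc (M.Pmat π ^ t) s₀ s ≤ ∑ s', (M.Pmat π ^ t) s₀ s' :=
        Finset.single_le_sum (fun s' _ => h.1 s₀ s') (Finset.mem_univ s)
    _ = 1 := h.2 s₀

theorem summable_d (hM : M.Valid) {π : M.S → M.A → ℝ} (hπ : M.IsPolicy π) (s₀ s : M.S) :
    Summable (fun t : ℕ => M.γ ^ t * (M.Pmat π ^ t) s₀ s) := by
  refine Summable.of_abs (Summable.of_nonneg_of_le (fun t => abs_nonneg _) (fun t => ?_)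
    (summable_geometric_of_lt_one hM.2.2.2.1 hM.2.2.2.2))
  rw [abs_mul, abs_pow, abs_of_nonneg hM.2.2.2.1,
    abs_of_nonneg (((pmat_stoch hM hπ).pow t).1 s₀ s)]
  calc M.γ ^ t * (M.Pmat π ^ t) s₀ s ≤ M.γ ^ t * 1 :=
        mul_le_mul_of_nonneg_left (pmat_pow_entry_le_one hM hπ t s₀ s)
          (pow_nonneg hM.2.2.2.1 t)
    _ = M.γ ^ t := mul_one _

theorem dvisit_nonneg (hM : M.Valid) {π : M.S → M.A → ℝ} (hπ : M.IsPolicy π) (s₀ s : M.S) :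
    0 ≤ M.dvisit π s₀ s := by
  refine mul_nonneg (by linarith [hM.2.2.2.2]) (tsum_nonneg fun t => ?_)
  exact mul_nonneg (pow_nonneg hM.2.2.2.1 t) (((pmat_stoch hM hπ).pow t).1 s₀ s)

theorem dvisit_sum_one (hM : M.Valid) {π : M.S → M.A → ℝ} (hπ : M.IsPolicy π) (s₀ : M.S) :
    ∑ s, M.dvisit π s₀ s = 1 := by
  unfold FinMDP.dvisit
  rw [← Finset.mul_sum, ← Summable.tsum_finsetSum (fun s _ => summable_d hM hπ s₀ s)]
  have : ∀ t : ℕ, ∑ s, M.γ ^ t * (M.Pmat π ^ t) s₀ s = M.γ ^ t := by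
    intro t
    rw [← Finset.mul_sum, ((pmat_stoch hM hπ).pow t).2 s₀, mul_one]
  rw [tsum_congr this, tsum_geometric_of_lt_one hM.2.2.2.1 hM.2.2.2.2]
  have hγ : (1 : ℝ) - M.γ ≠ 0 := by linarith [hM.2.2.2.2]
  field_simp

theorem bellman_d (hM : M.Valid) {π : M.S → M.A → ℝ} (hπ : M.IsPolicy π) (s₀ s : M.S) :
    M.dvisit π s₀ s = (1 - M.γ) * (if s₀ = s then 1 else 0) +
      M.γ * ∑ s'', M.dvisit π s₀ s'' * M.Pmat π s'' s := by
  have hsum := summable_d hM hπ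
  have h0 : ∑' t : ℕ, M.γ ^ t * (M.Pmat π ^ t) s₀ s =
      M.γ ^ 0 * (M.Pmat π ^ 0) s₀ s +
      ∑' t : ℕ, M.γ ^ (t+1) * (M.Pmat π ^ (t+1)) s₀ s := Summable.tsum_eq_zero_add (hsum s₀ s)
  have hterm : ∀ t : ℕ, M.γ ^ (t+1) * (M.Pmat π ^ (t+1)) s₀ s =
      ∑ s'', (M.γ ^ t * (M.Pmat π ^ t) s₀ s'') * (M.γ * M.Pmat π s'' s) := by
    intro t
    rw [pow_succ (M.Pmat π) t, Matrix.mul_apply, Finset.mul_sum]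
    exact Finset.sum_congr rfl fun s'' _ => by ring
  have hswap : ∑' t : ℕ, M.γ ^ (t+1) * (M.Pmat π ^ (t+1)) s₀ s =
      ∑ s'', (∑' t : ℕ, M.γ ^ t * (M.Pmat π ^ t) s₀ s'') * (M.γ * M.Pmat π s'' s) := by
    calc ∑' t : ℕ, M.γ ^ (t+1) * (M.Pmat π ^ (t+1)) s₀ s
        = ∑' t : ℕ, ∑ s'', (M.γ ^ t * (M.Pmat π ^ t) s₀ s'') * (M.γ * M.Pmat π s'' s) :=
          tsum_congr hterm
      _ = ∑ s'', ∑' t : ℕ, (M.γ ^ t * (M.Pmat π ^ t) s₀ s'') * (M.γ * M.Pmat π s'' s) :=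
          Summable.tsum_finsetSum fun s'' _ => (hsum s₀ s'').mul_right _
      _ = _ := Finset.sum_congr rfl fun s'' _ => tsum_mul_right
  unfold FinMDP.dvisit
  rw [h0, mul_add, hswap, Finset.mul_sum]
  congr 1
  · rw [pow_zero, one_mul, pow_zero, Matrix.one_apply]
  · rw [Finset.mul_sum]
    exact Finset.sum_congr rfl fun s'' _ => by ring

section Diff

variable (hM : M.Valid) {π π' : M.S → M.A → ℝ} (hπ : M.IsPolicy π) (hπ' : M.IsPolicy π')
variable {ε : ℝ} (hrow : ∀ s, ∑ a, |π s a - π' s a| ≤ ε)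

include hM hπ hπ' hrow

theorem rPol_diff (s : M.S) : |M.rPol π s - M.rPol π' s| ≤ ε := by
  unfold FinMDP.rPol
  rw [← Finset.sum_sub_distrib]
  calc |∑ a, (π s a * M.r s a - π' s a * M.r s a)|
      ≤ ∑ a, |(π s a - π' s a) * M.r s a| := by
        rw [show (∑ a, (π s a * M.r s a - π' s a * M.r s a)) =
          ∑ a, (π s a - π' s a) * M.r s a from Finset.sum_congr rfl fun a _ => by ring]
        exact Finset.abs_sum_le_sum_abs _ _
    _ ≤ ∑ a, |π s a - π' s a| := by
        refine Finset.sum_le_sum fun a _ => ?_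
        rw [abs_mul]
        have h1 : |M.r s a| ≤ 1 := by
          rw [abs_of_nonneg (hM.2.2.1 s a).1]; exact (hM.2.2.1 s a).2
        calc |π s a - π' s a| * |M.r s a| ≤ |π s a - π' s a| * 1 :=
              mul_le_mul_of_nonneg_left h1 (abs_nonneg _)
          _ = _ := mul_one _
    _ ≤ ε := hrow s

theorem pmat_diff_abs (s s' : M.S) :
    |M.Pmat π s s' - M.Pmat π' s s'| ≤ ∑ a, |π s a - π' s a| * M.P s a s' := by
  unfold FinMDP.Pmat
  simp only [Matrix.of_apply]
  rw [← Finset.sum_sub_distrib]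
  calc |∑ a, (π s a * M.P s a s' - π' s a * M.P s a s')|
      ≤ ∑ a, |(π s a - π' s a) * M.P s a s'| := by
        rw [show (∑ a, (π s a * M.P s a s' - π' s a * M.P s a s')) =
          ∑ a, (π s a - π' s a) * M.P s a s' from Finset.sum_congr rfl fun a _ => by ring]
        exact Finset.abs_sum_le_sum_abs _ _
    _ = ∑ a, |π s a - π' s a| * M.P s a s' := by
        refine Finset.sum_congr rfl fun a _ => ?_
        rw [abs_mul, abs_of_nonneg (hM.1 s a s')]

theorem pmat_diff_row (s : M.S) : ∑ s', |M.Pmat π s s' - M.Pmat π' s s'| ≤ ε := by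
  calc ∑ s', |M.Pmat π s s' - M.Pmat π' s s'|
      ≤ ∑ s', ∑ a, |π s a - π' s a| * M.P s a s' :=
        Finset.sum_le_sum fun s' _ => pmat_diff_abs hM hπ hπ' hrow s s'
    _ = ∑ a, |π s a - π' s a| * ∑ s', M.P s a s' := by
        rw [Finset.sum_comm]; simp [Finset.mul_sum]
    _ = ∑ a, |π s a - π' s a| := by simp [hM.2.1]
    _ ≤ ε := hrow s

theorem V_diff [Nonempty M.S] (s : M.S) :
    |M.V π s - M.V π' s| ≤ ε / (1 - M.γ) ^ 2 := by
  have hγ0 := hM.2.2.2.1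
  have hγ1 := hM.2.2.2.2
  have h1γ : (0:ℝ) < 1 - M.γ := by linarith
  obtain ⟨s₁, hs₁⟩ := Finite.exists_max (fun s => |M.V π s - M.V π' s|)
  have key : |M.V π s₁ - M.V π' s₁| ≤
      ε + M.γ * (ε * (1 - M.γ)⁻¹) + M.γ * |M.V π s₁ - M.V π' s₁| := by
    have hb := bellman_V hM hπ s₁
    have hb' := bellman_V hM hπ' s₁
    have hsplit : M.V π s₁ - M.V π' s₁ =
        (M.rPol π s₁ - M.rPol π' s₁) +
        M.γ * (∑ s', (M.Pmat π s₁ s' - M.Pmat π' s₁ s') * M.V π' s') +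
        M.γ * (∑ s', M.Pmat π s₁ s' * (M.V π s' - M.V π' s')) := by
      rw [hb, hb']
      have e1 : (∑ s', (M.Pmat π s₁ s' - M.Pmat π' s₁ s') * M.V π' s') +
          ∑ s', M.Pmat π s₁ s' * (M.V π s' - M.V π' s') =
          (∑ s', M.Pmat π s₁ s' * M.V π s') - ∑ s', M.Pmat π' s₁ s' * M.V π' s' := by
        rw [← Finset.sum_add_distrib, ← Finset.sum_sub_distrib]
        exact Finset.sum_congr rfl fun s' _ => by ring
      linear_combination (-M.γ) * e1
    conv_lhs => rw [hsplit]
    have t1 : |M.rPol π s₁ - M.rPol π' s₁| ≤ ε := rPol_diff hM hπ hπ' hrow s₁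
    have t2 : |∑ s', (M.Pmat π s₁ s' - M.Pmat π' s₁ s') * M.V π' s'| ≤ ε * (1 - M.γ)⁻¹ := by
      calc |∑ s', (M.Pmat π s₁ s' - M.Pmat π' s₁ s') * M.V π' s'|
          ≤ ∑ s', |M.Pmat π s₁ s' - M.Pmat π' s₁ s'| * (1 - M.γ)⁻¹ := by
            refine (Finset.abs_sum_le_sum_abs _ _).trans (Finset.sum_le_sum fun s' _ => ?_)
            rw [abs_mul]
            exact mul_le_mul_of_nonneg_left (V_abs_le hM hπ' s') (abs_nonneg _)
        _ = (∑ s', |M.Pmat π s₁ s' - M.Pmat π' s₁ s'|) * (1 - M.γ)⁻¹ := by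
            rw [Finset.sum_mul]
        _ ≤ ε * (1 - M.γ)⁻¹ :=
            mul_le_mul_of_nonneg_right (pmat_diff_row hM hπ hπ' hrow s₁) (by positivity)
    have t3 : |∑ s', M.Pmat π s₁ s' * (M.V π s' - M.V π' s')| ≤ |M.V π s₁ - M.V π' s₁| := by
      calc |∑ s', M.Pmat π s₁ s' * (M.V π s' - M.V π' s')|
          ≤ ∑ s', M.Pmat π s₁ s' * |M.V π s₁ - M.V π' s₁| := by
            refine (Finset.abs_sum_le_sum_abs _ _).trans (Finset.sum_le_sum fun s' _ => ?_)
            rw [abs_mul, abs_of_nonneg ((pmat_stoch hM hπ).1 s₁ s')]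
            exact mul_le_mul_of_nonneg_left (hs₁ s') ((pmat_stoch hM hπ).1 s₁ s')
        _ = |M.V π s₁ - M.V π' s₁| := by
            rw [← Finset.sum_mul, (pmat_stoch hM hπ).2 s₁, one_mul]
    calc |(M.rPol π s₁ - M.rPol π' s₁) +
          M.γ * (∑ s', (M.Pmat π s₁ s' - M.Pmat π' s₁ s') * M.V π' s') +
          M.γ * (∑ s', M.Pmat π s₁ s' * (M.V π s' - M.V π' s'))|
        ≤ |M.rPol π s₁ - M.rPol π' s₁| +
          |M.γ * (∑ s', (M.Pmat π s₁ s' - M.Pmat π' s₁ s') * M.V π' s')| +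
          |M.γ * (∑ s', M.Pmat π s₁ s' * (M.V π s' - M.V π' s'))| :=
          (abs_add_le _ _).trans (by gcongr; exact abs_add_le _ _)
      _ ≤ ε + M.γ * (ε * (1 - M.γ)⁻¹) + M.γ * |M.V π s₁ - M.V π' s₁| := by
          rw [abs_mul, abs_mul, abs_of_nonneg hγ0]
          gcongr
  have hMx : |M.V π s₁ - M.V π' s₁| ≤ ε / (1 - M.γ) ^ 2 := by
    have h2 : (1 - M.γ) * |M.V π s₁ - M.V π' s₁| ≤ ε + M.γ * (ε * (1 - M.γ)⁻¹) := by
      nlinarith [key]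
    rw [div_eq_mul_inv]
    have h3 : ε + M.γ * (ε * (1 - M.γ)⁻¹) = ε * (1 - M.γ)⁻¹ := by
      field_simp
      ring
    rw [h3] at h2
    have := mul_le_mul_of_nonneg_left h2 (le_of_lt (inv_pos.mpr h1γ))
    calc |M.V π s₁ - M.V π' s₁|
        = (1 - M.γ)⁻¹ * ((1 - M.γ) * |M.V π s₁ - M.V π' s₁|) := by
          field_simp
      _ ≤ (1 - M.γ)⁻¹ * (ε * (1 - M.γ)⁻¹) := this
      _ = ε * ((1 - M.γ) ^ 2)⁻¹ := by rw [sq]; field_simp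
  exact (hs₁ s).trans hMx

theorem Q_abs_le (s : M.S) (a : M.A) : |M.Qf π s a| ≤ (1 - M.γ)⁻¹ := by
  have hγ0 := hM.2.2.2.1
  have hγ1 := hM.2.2.2.2
  have h1γ : (0:ℝ) < 1 - M.γ := by linarith
  unfold FinMDP.Qf
  have h1 : |M.r s a| ≤ 1 := by
    rw [abs_of_nonneg (hM.2.2.1 s a).1]; exact (hM.2.2.1 s a).2
  have h2 : |∑ s', M.P s a s' * M.V π s'| ≤ (1 - M.γ)⁻¹ := by
    calc |∑ s', M.P s a s' * M.V π s'| ≤ ∑ s', M.P s a s' * (1 - M.γ)⁻¹ := by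
          refine (Finset.abs_sum_le_sum_abs _ _).trans (Finset.sum_le_sum fun s' _ => ?_)
          rw [abs_mul, abs_of_nonneg (hM.1 s a s')]
          exact mul_le_mul_of_nonneg_left (V_abs_le hM hπ s') (hM.1 s a s')
      _ = (1 - M.γ)⁻¹ := by rw [← Finset.sum_mul, hM.2.1 s a, one_mul]
  calc |M.r s a + M.γ * ∑ s', M.P s a s' * M.V π s'|
      ≤ |M.r s a| + |M.γ * ∑ s', M.P s a s' * M.V π s'| := abs_add_le _ _
    _ = |M.r s a| + M.γ * |∑ s', M.P s a s' * M.V π s'| := by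
        rw [abs_mul, abs_of_nonneg hγ0]
    _ ≤ 1 + M.γ * (1 - M.γ)⁻¹ := by gcongr
    _ = (1 - M.γ)⁻¹ := by field_simp; ring

theorem Q_diff [Nonempty M.S] (s : M.S) (a : M.A) :
    |M.Qf π s a - M.Qf π' s a| ≤ M.γ * (ε / (1 - M.γ) ^ 2) := by
  have hγ0 := hM.2.2.2.1
  unfold FinMDP.Qf
  have h : M.r s a + M.γ * ∑ s', M.P s a s' * M.V π s' -
      (M.r s a + M.γ * ∑ s', M.P s a s' * M.V π' s') =
      M.γ * ∑ s', M.P s a s' * (M.V π s' - M.V π' s') := by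
    have e1 : ∑ s', M.P s a s' * (M.V π s' - M.V π' s') =
        (∑ s', M.P s a s' * M.V π s') - ∑ s', M.P s a s' * M.V π' s' := by
      rw [← Finset.sum_sub_distrib]
      exact Finset.sum_congr rfl fun s' _ => by ring
    linear_combination (-M.γ) * e1
  rw [h, abs_mul, abs_of_nonneg hγ0]
  refine mul_le_mul_of_nonneg_left ?_ hγ0
  calc |∑ s', M.P s a s' * (M.V π s' - M.V π' s')|
      ≤ ∑ s', M.P s a s' * (ε / (1 - M.γ) ^ 2) := by
        refine (Finset.abs_sum_le_sum_abs _ _).trans (Finset.sum_le_sum fun s' _ => ?_)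
        rw [abs_mul, abs_of_nonneg (hM.1 s a s')]
        exact mul_le_mul_of_nonneg_left (V_diff hM hπ hπ' hrow s') (hM.1 s a s')
    _ = ε / (1 - M.γ) ^ 2 := by rw [← Finset.sum_mul, hM.2.1 s a, one_mul]

theorem d_diff (s₀ : M.S) :
    ∑ s, |M.dvisit π s₀ s - M.dvisit π' s₀ s| ≤ M.γ * ε / (1 - M.γ) := by
  have hγ0 := hM.2.2.2.1
  have hγ1 := hM.2.2.2.2
  have h1γ : (0:ℝ) < 1 - M.γ := by linarith
  set L := ∑ s, |M.dvisit π s₀ s - M.dvisit π' s₀ s| with hL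
  have hLkey : L ≤ M.γ * (L + ε) := by
    have hentry : ∀ s, |M.dvisit π s₀ s - M.dvisit π' s₀ s| ≤
        M.γ * (∑ s'', |M.dvisit π s₀ s'' - M.dvisit π' s₀ s''| * M.Pmat π s'' s +
          ∑ s'', M.dvisit π' s₀ s'' * |M.Pmat π s'' s - M.Pmat π' s'' s|) := by
      intro s
      have hb := bellman_d hM hπ s₀ s
      have hb' := bellman_d hM hπ' s₀ s
      have hsplit : M.dvisit π s₀ s - M.dvisit π' s₀ s =
          M.γ * (∑ s'', ((M.dvisit π s₀ s'' - M.dvisit π' s₀ s'') * M.Pmat π s'' s +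
            M.dvisit π' s₀ s'' * (M.Pmat π s'' s - M.Pmat π' s'' s))) := by
        rw [hb, hb']
        have e1 : (∑ s'', ((M.dvisit π s₀ s'' - M.dvisit π' s₀ s'') * M.Pmat π s'' s +
            M.dvisit π' s₀ s'' * (M.Pmat π s'' s - M.Pmat π' s'' s))) =
            (∑ s'', M.dvisit π s₀ s'' * M.Pmat π s'' s) -
            ∑ s'', M.dvisit π' s₀ s'' * M.Pmat π' s'' s := by
          rw [← Finset.sum_sub_distrib]
          exact Finset.sum_congr rfl fun s'' _ => by ring
        linear_combination (-M.γ) * e1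
      rw [hsplit, abs_mul, abs_of_nonneg hγ0]
      refine mul_le_mul_of_nonneg_left ?_ hγ0
      refine (Finset.abs_sum_le_sum_abs _ _).trans ?_
      rw [← Finset.sum_add_distrib]
      refine Finset.sum_le_sum fun s'' _ => ?_
      refine (abs_add_le _ _).trans ?_
      gcongr
      · rw [abs_mul, abs_of_nonneg ((pmat_stoch hM hπ).1 s'' s)]
      · rw [abs_mul, abs_of_nonneg (dvisit_nonneg hM hπ' s₀ s'')]
    calc L ≤ ∑ s, M.γ * (∑ s'', |M.dvisit π s₀ s'' - M.dvisit π' s₀ s''| * M.Pmat π s'' s +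
          ∑ s'', M.dvisit π' s₀ s'' * |M.Pmat π s'' s - M.Pmat π' s'' s|) :=
          Finset.sum_le_sum fun s _ => hentry s
      _ = M.γ * (∑ s, ∑ s'', |M.dvisit π s₀ s'' - M.dvisit π' s₀ s''| * M.Pmat π s'' s +
          ∑ s, ∑ s'', M.dvisit π' s₀ s'' * |M.Pmat π s'' s - M.Pmat π' s'' s|) := by
          rw [← Finset.mul_sum, Finset.sum_add_distrib]
      _ ≤ M.γ * (L + ε) := by
          refine mul_le_mul_of_nonneg_left ?_ hγ0
          have e1 : ∑ s, ∑ s'', |M.dvisit π s₀ s'' - M.dvisit π' s₀ s''| * M.Pmat π s'' s = L := by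
            rw [Finset.sum_comm]
            refine Finset.sum_congr rfl fun s'' _ => ?_
            rw [← Finset.mul_sum, (pmat_stoch hM hπ).2 s'', mul_one]
          have e2 : ∑ s, ∑ s'', M.dvisit π' s₀ s'' * |M.Pmat π s'' s - M.Pmat π' s'' s| ≤ ε := by
            rw [Finset.sum_comm]
            calc ∑ s'', ∑ s, M.dvisit π' s₀ s'' * |M.Pmat π s'' s - M.Pmat π' s'' s|
                = ∑ s'', M.dvisit π' s₀ s'' * ∑ s, |M.Pmat π s'' s - M.Pmat π' s'' s| := by
                  simp [Finset.mul_sum]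
              _ ≤ ∑ s'', M.dvisit π' s₀ s'' * ε :=
                  Finset.sum_le_sum fun s'' _ => mul_le_mul_of_nonneg_left
                    (pmat_diff_row hM hπ hπ' hrow s'') (dvisit_nonneg hM hπ' s₀ s'')
              _ = ε := by rw [← Finset.sum_mul, dvisit_sum_one hM hπ' s₀, one_mul]
          rw [e1]
          linarith
  have : L * (1 - M.γ) ≤ M.γ * ε := by nlinarith
  rw [div_eq_mul_inv]
  calc L = L * (1 - M.γ) * (1 - M.γ)⁻¹ := by field_simp
    _ ≤ M.γ * ε * (1 - M.γ)⁻¹ :=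
        mul_le_mul_of_nonneg_right this (le_of_lt (inv_pos.mpr h1γ))

end Diff

end FinMDPAux
/-- **Smoothness of the value function under the direct parameterization.** -/
theorem value_gradient_lipschitz_direct (M : FinMDP) (hM : M.Valid) (s₀ : M.S)
    -- `g π` is the policy gradient vector `∇_π V^π(s₀)`
    (g : (M.S → M.A → ℝ) → EuclideanSpace ℝ (M.S × M.A))
    (hg : ∀ (π : M.S → M.A → ℝ) (p : M.S × M.A),
        g π p = (1 / (1 - M.γ)) * M.dvisit π s₀ p.1 * M.Qf π p.1 p.2) :
    ∀ π π' : EuclideanSpace ℝ (M.S × M.A),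
      M.IsPolicy (fun s a => π (s, a)) → M.IsPolicy (fun s a => π' (s, a)) →
      ‖g (fun s a => π (s, a)) - g (fun s a => π' (s, a))‖ ≤
        2 * M.γ * (Fintype.card M.A : ℝ) / (1 - M.γ) ^ 3 * ‖π - π'‖ := by
  intro π π' hπ hπ'
  classical
  have hγ0 := hM.2.2.2.1
  have hγ1 := hM.2.2.2.2
  have h1γ : (0:ℝ) < 1 - M.γ := by linarith
  have hnorm2 : ∀ (x : EuclideanSpace ℝ (M.S × M.A)), ‖x‖ = Real.sqrt (∑ p, (x p)^2) := by
    intro x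
    rw [EuclideanSpace.norm_eq]
    simp [Real.norm_eq_abs, sq_abs]
  have hRHS : 0 ≤ 2 * M.γ * (Fintype.card M.A : ℝ) / (1 - M.γ) ^ 3 * ‖π - π'‖ := by
    apply mul_nonneg _ (norm_nonneg _)
    apply div_nonneg _ (pow_nonneg h1γ.le 3)
    positivity
  by_cases hS : IsEmpty M.S
  · have : ‖g (fun s a => π (s, a)) - g (fun s a => π' (s, a))‖ = 0 := by
      rw [hnorm2]
      simp
    rw [this]
    exact hRHS
  haveI : Nonempty M.S := not_isEmpty_iff.mp hS
  set E := ‖π - π'‖ with hEdef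
  have hE : 0 ≤ E := norm_nonneg _
  set ε := Real.sqrt (Fintype.card M.A) * E with hεdef
  have hε : 0 ≤ ε := mul_nonneg (Real.sqrt_nonneg _) hE
  have hrow : ∀ s, ∑ a, |(fun s a => π (s, a)) s a - (fun s a => π' (s, a)) s a| ≤ ε := by
    intro s
    simp only
    have hsq : ∑ a, (π (s, a) - π' (s, a))^2 ≤ E^2 := by
      have hnorm : E^2 = ∑ p : M.S × M.A, ((π - π') p)^2 := by
        rw [hEdef, hnorm2, Real.sq_sqrt (Finset.sum_nonneg fun p _ => sq_nonneg _)]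
      have hsub : ∀ p : M.S × M.A, (π - π') p = π p - π' p := fun p => by simp
      rw [hnorm]
      calc ∑ a, (π (s, a) - π' (s, a))^2
          = ∑ a, ((π - π') (s, a))^2 := by
            exact Finset.sum_congr rfl fun a _ => by rw [hsub]
        _ ≤ ∑ p : M.S × M.A, ((π - π') p)^2 := by
            rw [Fintype.sum_prod_type]
            exact Finset.single_le_sum
              (f := fun s' => ∑ a, ((π - π') (s', a))^2)
              (fun s' _ => Finset.sum_nonneg fun a _ => sq_nonneg _) (Finset.mem_univ s)
    have h1 : (∑ a, |π (s, a) - π' (s, a)|)^2 ≤ (Fintype.card M.A : ℝ) * E^2 := by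
      calc (∑ a, |π (s, a) - π' (s, a)|)^2
          ≤ ((Finset.univ : Finset M.A).card : ℝ) * ∑ a, |π (s, a) - π' (s, a)|^2 := by
            exact_mod_cast sq_sum_le_card_mul_sum_sq
              (s := (Finset.univ : Finset M.A)) (f := fun a => |π (s, a) - π' (s, a)|)
        _ = (Fintype.card M.A : ℝ) * ∑ a, (π (s, a) - π' (s, a))^2 := by
            rw [Finset.card_univ]
            simp [sq_abs]
        _ ≤ (Fintype.card M.A : ℝ) * E^2 := by
            exact mul_le_mul_of_nonneg_left hsq (by positivity)
    have h2 := Real.sqrt_le_sqrt h1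
    rwa [Real.sqrt_sq (Finset.sum_nonneg fun a _ => abs_nonneg _),
      Real.sqrt_mul (by positivity) (E^2), Real.sqrt_sq hE] at h2
  set πf : M.S → M.A → ℝ := fun s a => π (s, a) with hπf
  set π'f : M.S → M.A → ℝ := fun s a => π' (s, a) with hπ'f
  set u : M.S → ℝ := fun s => (1 - M.γ)⁻¹ *
    (|M.dvisit πf s₀ s - M.dvisit π'f s₀ s| * (1 - M.γ)⁻¹ +
      M.dvisit π'f s₀ s * (M.γ * (ε / (1 - M.γ) ^ 2))) with hu_def
  have hu : ∀ s, 0 ≤ u s := by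
    intro s
    apply mul_nonneg (by positivity)
    apply add_nonneg (mul_nonneg (abs_nonneg _) (by positivity))
    apply mul_nonneg (FinMDPAux.dvisit_nonneg hM hπ' s₀ s)
    apply mul_nonneg hγ0
    positivity
  have hentry : ∀ p : M.S × M.A, |g πf p - g π'f p| ≤ u p.1 := by
    intro p
    rw [hg, hg]
    have e : (1 / (1 - M.γ)) * M.dvisit πf s₀ p.1 * M.Qf πf p.1 p.2 -
        (1 / (1 - M.γ)) * M.dvisit π'f s₀ p.1 * M.Qf π'f p.1 p.2 =
        (1 / (1 - M.γ)) * ((M.dvisit πf s₀ p.1 - M.dvisit π'f s₀ p.1) * M.Qf πf p.1 p.2 +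
          M.dvisit π'f s₀ p.1 * (M.Qf πf p.1 p.2 - M.Qf π'f p.1 p.2)) := by ring
    rw [e, abs_mul, abs_of_nonneg (by positivity : (0:ℝ) ≤ 1 / (1 - M.γ)), one_div, hu_def]
    refine mul_le_mul_of_nonneg_left ?_ (by positivity)
    refine (abs_add_le _ _).trans ?_
    have t1 : |(M.dvisit πf s₀ p.1 - M.dvisit π'f s₀ p.1) * M.Qf πf p.1 p.2| ≤
        |M.dvisit πf s₀ p.1 - M.dvisit π'f s₀ p.1| * (1 - M.γ)⁻¹ := by
      rw [abs_mul]
      exact mul_le_mul_of_nonneg_left (FinMDPAux.Q_abs_le hM hπ hπ' hrow p.1 p.2) (abs_nonneg _)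
    have t2 : |M.dvisit π'f s₀ p.1 * (M.Qf πf p.1 p.2 - M.Qf π'f p.1 p.2)| ≤
        M.dvisit π'f s₀ p.1 * (M.γ * (ε / (1 - M.γ) ^ 2)) := by
      rw [abs_mul, abs_of_nonneg (FinMDPAux.dvisit_nonneg hM hπ' s₀ p.1)]
      exact mul_le_mul_of_nonneg_left (FinMDPAux.Q_diff hM hπ hπ' hrow p.1 p.2)
        (FinMDPAux.dvisit_nonneg hM hπ' s₀ p.1)
    exact add_le_add t1 t2
  set B : ℝ := 2 * M.γ * ε / (1 - M.γ) ^ 3 with hBdef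
  have hB : 0 ≤ B := by
    apply div_nonneg _ (pow_nonneg h1γ.le 3)
    exact mul_nonneg (mul_nonneg (by norm_num) hγ0) hε
  have husum : ∑ s, u s ≤ B := by
    have l1 : ∑ s, u s = (1 - M.γ)⁻¹ *
        ((∑ s, |M.dvisit πf s₀ s - M.dvisit π'f s₀ s|) * (1 - M.γ)⁻¹ +
          (∑ s, M.dvisit π'f s₀ s) * (M.γ * (ε / (1 - M.γ) ^ 2))) := by
      rw [hu_def, ← Finset.mul_sum, Finset.sum_add_distrib, Finset.sum_mul, Finset.sum_mul]
    rw [l1, FinMDPAux.dvisit_sum_one hM hπ' s₀, one_mul]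
    have l2 := FinMDPAux.d_diff hM hπ hπ' hrow s₀
    calc (1 - M.γ)⁻¹ *
        ((∑ s, |M.dvisit πf s₀ s - M.dvisit π'f s₀ s|) * (1 - M.γ)⁻¹ +
          M.γ * (ε / (1 - M.γ) ^ 2))
        ≤ (1 - M.γ)⁻¹ * ((M.γ * ε / (1 - M.γ)) * (1 - M.γ)⁻¹ + M.γ * (ε / (1 - M.γ) ^ 2)) := by
          refine mul_le_mul_of_nonneg_left ?_ (by positivity)
          refine add_le_add (mul_le_mul_of_nonneg_right l2 (by positivity)) le_rfl
      _ = B := by rw [hBdef]; field_simp; ring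
  have hfinal : ‖g πf - g π'f‖ ≤ Real.sqrt (Fintype.card M.A) * B := by
    rw [hnorm2]
    have hsum : ∑ p, ((g πf - g π'f) p)^2 ≤ (Fintype.card M.A : ℝ) * B^2 := by
      calc ∑ p, ((g πf - g π'f) p)^2 ≤ ∑ p : M.S × M.A, (u p.1)^2 := by
            refine Finset.sum_le_sum fun p _ => ?_
            have hsub : (g πf - g π'f) p = g πf p - g π'f p := by simp
            rw [hsub, ← sq_abs]
            exact pow_le_pow_left₀ (abs_nonneg _) (hentry p) 2
        _ = (Fintype.card M.A : ℝ) * ∑ s, (u s)^2 := by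
            rw [Fintype.sum_prod_type, Finset.mul_sum]
            exact Finset.sum_congr rfl fun s _ => by
              simp [Finset.sum_const, Finset.card_univ, mul_comm]
        _ ≤ (Fintype.card M.A : ℝ) * (∑ s, u s)^2 := by
            exact mul_le_mul_of_nonneg_left
              (Finset.sum_sq_le_sq_sum_of_nonneg fun s _ => hu s) (by positivity)
        _ ≤ (Fintype.card M.A : ℝ) * B^2 := by
            exact mul_le_mul_of_nonneg_left
              (pow_le_pow_left₀ (Finset.sum_nonneg fun s _ => hu s) husum 2) (by positivity)
    calc Real.sqrt (∑ p, ((g πf - g π'f) p)^2)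
        ≤ Real.sqrt ((Fintype.card M.A : ℝ) * B^2) := Real.sqrt_le_sqrt hsum
      _ = Real.sqrt (Fintype.card M.A) * B := by
          rw [Real.sqrt_mul (by positivity) (B^2), Real.sqrt_sq hB]
  refine hfinal.trans (le_of_eq ?_)
  rw [hBdef, hεdef]
  have hcc : Real.sqrt (Fintype.card M.A : ℝ) * Real.sqrt (Fintype.card M.A : ℝ) =
      (Fintype.card M.A : ℝ) := Real.mul_self_sqrt (by positivity)
  have hkey : Real.sqrt (Fintype.card M.A : ℝ) *
      (2 * M.γ * (Real.sqrt (Fintype.card M.A : ℝ) * E) / (1 - M.γ) ^ 3) =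
      (Real.sqrt (Fintype.card M.A : ℝ) * Real.sqrt (Fintype.card M.A : ℝ)) *
        (2 * M.γ * E) / (1 - M.γ) ^ 3 := by ring
  rw [hkey, hcc]
  ring
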